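/- Suppose α i > 0 for all i and let μ be the unique real number with ∑_{i} max((v i − μ)/(α i), 0) = 1. If at time t the memories satisfy ∑_{i} M i t ≤ 1, then there exists an item i with u i t ≥ μ; in particular max_{i} u i t ≥ μ. -/

import Mathlib

/-- The memory of item `i` at time `t`, given decay rate `r` and selection sequence `x`. -/
def memory {n : ℕ} (r : ℝ) (x : ℕ → Fin n) (i : Fin n) : ℕ → ℝ
  | 0 => 0
  | t + 1 => (1 - r) * memory r x i t + r * (if x t = i then 1 else 0)

/-- If `μ` is the (unique) real with `∑ i, max((v i − μ)/α i, 0) = 1` and the memories at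
time `t` satisfy `∑ i, M i t ≤ 1`, then some item has utility `u i t = v i − α i·M i t ≥ μ`;
in particular `max_i u i t ≥ μ`. -/
theorem max_utility_lower_bound (n : ℕ) (hn : 1 ≤ n) (r : ℝ) (hr0 : 0 < r) (hr1 : r < 1)
    (v α : Fin n → ℝ) (hα : ∀ i, 0 < α i) (x : ℕ → Fin n) (μ : ℝ)
    (hμ : ∑ i : Fin n, max ((v i - μ) / α i) 0 = 1)
    (t : ℕ) (hM : ∑ i : Fin n, memory r x i t ≤ 1) :
    (∃ i : Fin n, μ ≤ v i - α i * memory r x i t) ∧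
    μ ≤ Finset.univ.sup' ⟨⟨0, hn⟩, Finset.mem_univ _⟩
        (fun i : Fin n => v i - α i * memory r x i t) := by
  have hmem : ∀ (i : Fin n) (s : ℕ), 0 ≤ memory r x i s := by
    intro i s
    induction s with
    | zero => simp [memory]
    | succ s ih =>
      have : (0:ℝ) ≤ (if x s = i then (1:ℝ) else 0) := by positivity
      have h1r : (0:ℝ) ≤ 1 - r := by linarith
      simp only [memory]
      have := mul_nonneg h1r ih
      have := mul_nonneg hr0.le ‹(0:ℝ) ≤ (if x s = i then (1:ℝ) else 0)›
      linarith
  have key : ∃ i : Fin n, μ ≤ v i - α i * memory r x i t := by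
    by_contra h
    push_neg at h
    have hle : ∀ i ∈ Finset.univ, max ((v i - μ) / α i) 0 ≤ memory r x i t := by
      intro i _
      have := h i
      have hq : (v i - μ) / α i < memory r x i t := by
        rw [div_lt_iff₀ (hα i)]
        nlinarith [hα i]
      exact max_le hq.le (hmem i t)
    have hsum : (1:ℝ) ≤ ∑ i : Fin n, memory r x i t := by
      rw [← hμ]; exact Finset.sum_le_sum hle
    have hsumeq : ∑ i : Fin n, memory r x i t = 1 := le_antisymm hM hsum
    obtain ⟨i, _, hi⟩ : ∃ i ∈ Finset.univ, 0 < memory r x i t := by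
      by_contra hc
      push_neg at hc
      have : ∑ i : Fin n, memory r x i t ≤ 0 :=
        Finset.sum_nonpos fun i hi => hc i hi
      linarith
    have hstrict : max ((v i - μ) / α i) 0 < memory r x i t := by
      have hq : (v i - μ) / α i < memory r x i t := by
        rw [div_lt_iff₀ (hα i)]
        nlinarith [hα i, h i]
      exact max_lt hq hi
    have : (1:ℝ) < ∑ i : Fin n, memory r x i t := by
      rw [← hμ]
      exact Finset.sum_lt_sum hle ⟨i, Finset.mem_univ i, hstrict⟩
    linarith
  refine ⟨key, ?_⟩
  obtain ⟨i, hi⟩ := key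
  exact le_trans hi (Finset.le_sup' (fun j : Fin n => v j - α j * memory r x j t) (Finset.mem_univ i))
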